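/- Assume P = diag(κ₁, …, κ_p) − Λ is positive definite. If θ is a critical point of f with c_i(θ) > 0 for all i, then s_i(θ) = 0 for all i, i.e. θ_i ≡ μ_i (mod 2π) for every i. -/

import Mathlib

open Real

/-- If `P = diag κ - Λ` is positive definite and `θ` is a critical point of `f`
with `cᵢ(θ) > 0` for all `i`, then `sᵢ(θ) = 0` for all `i`, i.e.
`θᵢ ≡ μᵢ (mod 2π)` for every `i`. -/
theorem stmt_3 (p : ℕ) (hp : 1 ≤ p) (μ κ : Fin p → ℝ)
    (hκ : ∀ i, 0 ≤ κ i)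
    (Λ : Matrix (Fin p) (Fin p) ℝ) (hΛsym : Λ.IsSymm)
    (hΛdiag : ∀ i, Λ i i = 0)
    (hP : (Matrix.diagonal κ - Λ).PosDef)
    (θ : Fin p → ℝ)
    (hcrit : ∀ i, -κ i * Real.sin (θ i - μ i)
        + Real.cos (θ i - μ i) * ∑ k, Λ i k * Real.sin (θ k - μ k) = 0)
    (hc : ∀ i, 0 < Real.cos (θ i - μ i)) :
    ∀ i, Real.sin (θ i - μ i) = 0 ∧ ∃ k : ℤ, θ i = μ i + 2 * π * (k : ℝ) := by
  set s : Fin p → ℝ := fun i => Real.sin (θ i - μ i) with hs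
  -- from criticality: ∑ k, Λ i k * s k = κ i * s i / c i
  have hsum : ∀ i, ∑ k, Λ i k * s k = κ i * s i / Real.cos (θ i - μ i) := by
    intro i
    have h := hcrit i
    have hci := (hc i).ne'
    field_simp
    linarith [h]
  have hs0 : s = 0 := by
    by_contra hne
    have hpos := hP.dotProduct_mulVec_pos hne
    have hquad : dotProduct (star s) ((Matrix.diagonal κ - Λ).mulVec s)
        = ∑ i, (κ i * s i * s i - s i * (κ i * s i / Real.cos (θ i - μ i))) := by
      simp only [star_trivial, dotProduct, Matrix.sub_mulVec,
        Matrix.mulVec_diagonal, Pi.sub_apply, Matrix.mulVec, dotProduct]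
      refine Finset.sum_congr rfl fun i _ => ?_
      have key : ∑ x, (Matrix.diagonal κ - Λ) i x * s x
          = κ i * s i - ∑ x, Λ i x * s x := by
        simp [Matrix.sub_apply, Matrix.diagonal_apply, sub_mul,
          Finset.sum_sub_distrib, Finset.sum_ite_eq]
      rw [key, hsum i]
      ring
    rw [hquad] at hpos
    have hnonpos : ∑ i, (κ i * s i * s i - s i * (κ i * s i / Real.cos (θ i - μ i))) ≤ 0 := by
      refine Finset.sum_nonpos fun i _ => ?_
      have hci := hc i
      have hc1 : Real.cos (θ i - μ i) ≤ 1 := Real.cos_le_one _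
      rw [sub_nonpos]
      rw [div_eq_mul_inv, ← mul_assoc]
      have h1 : (1:ℝ) ≤ (Real.cos (θ i - μ i))⁻¹ := by
        rw [le_inv_comm₀ one_pos hci]; simpa using hc1
      have hnn : 0 ≤ κ i * s i * s i := by
        have := mul_self_nonneg (s i)
        nlinarith [hκ i]
      calc κ i * s i * s i = κ i * s i * s i * 1 := by ring
        _ ≤ κ i * s i * s i * (Real.cos (θ i - μ i))⁻¹ := by
            exact mul_le_mul_of_nonneg_left h1 hnn
        _ = s i * (κ i * s i) * (Real.cos (θ i - μ i))⁻¹ := by ring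
    linarith
  intro i
  have hsi : Real.sin (θ i - μ i) = 0 := by
    have := congrFun hs0 i; simpa [hs] using this
  refine ⟨hsi, ?_⟩
  have hcos1 : Real.cos (θ i - μ i) = 1 := by
    rcases Real.sin_eq_zero_iff_cos_eq.mp hsi with h | h
    · exact h
    · exfalso; linarith [hc i]
  obtain ⟨n, hn⟩ := (Real.cos_eq_one_iff _).mp hcos1
  exact ⟨n, by push_cast at hn ⊢; linarith⟩
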